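/- Let (M, P) be a τ-rigid pair over a finite-dimensional algebra A. A module N belongs to ⊥(τM) ∩ P^⊥ (that is, Hom_A(N, τM) = 0 and Hom_A(P, N) = 0) if and only if ⟨g_M − g_P, dim N₀⟩ ≤ 0 for every quotient module N₀ of N. -/
import Mathlib

section Aux

variable (k A : Type) [Field k] [Ring A] [Algebra k A]

/-- Hom spaces between finite-dimensional modules are finite dimensional over `k`. -/
lemma homFD_aux (X Y : Type) [AddCommGroup X] [Module A X] [Module k X] [IsScalarTower k A X]
    [FiniteDimensional k X]
    [AddCommGroup Y] [Module A Y] [Module k Y] [IsScalarTower k A Y]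
    [FiniteDimensional k Y] [SMulCommClass A k Y] : FiniteDimensional k (X →ₗ[A] Y) :=
  FiniteDimensional.of_injective (LinearMap.restrictScalarsₗ k A X Y k)
    (LinearMap.restrictScalars_injective k)

/-- Quotients of finite-dimensional modules are finite dimensional over `k`. -/
lemma quotFD_aux (N : Type) [AddCommGroup N] [Module A N] [Module k N] [IsScalarTower k A N]
    [FiniteDimensional k N] (S : Submodule A N) : FiniteDimensional k (N ⧸ S) :=
  Module.Finite.of_surjective (S.mkQ.restrictScalars k) (Submodule.mkQ_surjective S)

end Aux

/-- For a τ-rigid pair `(M, P)`, a module `N` lies in `⊥(τM) ∩ P^⊥` if and only if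
`⟨g_M - g_P, dim N₀⟩ ≤ 0` for every quotient module `N₀` of `N`. -/
theorem mem_perp_iff_pairing_nonpos (n : ℕ) (k A : Type) [Field k] [Ring A] [Algebra k A]
    [FiniteDimensional k A]
    (M : Type) [AddCommGroup M] [Module A M] [Module k M] [IsScalarTower k A M]
    [FiniteDimensional k M] [SMulCommClass A k M]
    (τM : Type) [AddCommGroup τM] [Module A τM] [Module k τM] [IsScalarTower k A τM]
    [FiniteDimensional k τM] [SMulCommClass A k τM]
    (P : Type) [AddCommGroup P] [Module A P] [Module k P] [IsScalarTower k A P]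
    [FiniteDimensional k P] [SMulCommClass A k P] [Module.Projective A P]
    (N : Type) [AddCommGroup N] [Module A N] [Module k N] [IsScalarTower k A N]
    [FiniteDimensional k N] [SMulCommClass A k N]
    (dimVec : (X : Type) → [AddCommGroup X] → [Module A X] → Fin n → ℕ)
    (gM gP : Fin n → ℤ)
    -- the Auslander–Reiten formula characterizing the g-vector of M
    (hARM : ∀ (X : Type) [AddCommGroup X] [Module A X] [Module k X] [IsScalarTower k A X]
        [FiniteDimensional k X] [SMulCommClass A k X],
      (∑ i, gM i * (dimVec X i : ℤ)) =
        (Module.finrank k (X →ₗ[A] τM) : ℤ) - (Module.finrank k (M →ₗ[A] X) : ℤ))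
    -- the pairing formula characterizing the g-vector of the projective P
    (hgP : ∀ (X : Type) [AddCommGroup X] [Module A X] [Module k X] [IsScalarTower k A X]
        [FiniteDimensional k X] [SMulCommClass A k X],
      (∑ i, gP i * (dimVec X i : ℤ)) = -(Module.finrank k (P →ₗ[A] X) : ℤ))
    -- (M, P) is a τ-rigid pair
    (hrigid : ∀ f : M →ₗ[A] τM, f = 0)
    (hPM : ∀ f : P →ₗ[A] M, f = 0) :
    ((∀ f : N →ₗ[A] τM, f = 0) ∧ (∀ f : P →ₗ[A] N, f = 0)) ↔
      (∀ S : Submodule A N, (∑ i, (gM i - gP i) * (dimVec (N ⧸ S) i : ℤ)) ≤ 0) := by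
  -- split the pairing into the two g-vector contributions
  have hsplit : ∀ S : Submodule A N,
      (∑ i, (gM i - gP i) * (dimVec (N ⧸ S) i : ℤ)) =
        (∑ i, gM i * (dimVec (N ⧸ S) i : ℤ)) - (∑ i, gP i * (dimVec (N ⧸ S) i : ℤ)) := by
    intro S
    rw [← Finset.sum_sub_distrib]
    exact Finset.sum_congr rfl fun i _ => by ring
  constructor
  · rintro ⟨hNτ, hPN⟩ S
    haveI := quotFD_aux k A N S
    haveI := homFD_aux k A (N ⧸ S) τM
    haveI := homFD_aux k A M (N ⧸ S)
    haveI := homFD_aux k A P (N ⧸ S)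
    -- Hom(N⧸S, τM) = 0
    have h1 : ∀ f : (N ⧸ S) →ₗ[A] τM, f = 0 := by
      intro f
      have h := hNτ (f.comp S.mkQ)
      ext x
      simpa using LinearMap.congr_fun h x
    -- Hom(P, N⧸S) = 0 by projectivity
    have h2 : ∀ g : P →ₗ[A] (N ⧸ S), g = 0 := by
      intro g
      obtain ⟨φ, hφ⟩ := Module.projective_lifting_property S.mkQ g (Submodule.mkQ_surjective S)
      rw [← hφ, hPN φ, LinearMap.comp_zero]
    haveI s1 : Subsingleton ((N ⧸ S) →ₗ[A] τM) := ⟨fun a b => (h1 a).trans (h1 b).symm⟩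
    haveI s2 : Subsingleton (P →ₗ[A] (N ⧸ S)) := ⟨fun a b => (h2 a).trans (h2 b).symm⟩
    have e1 := hARM (N ⧸ S)
    have e2 := hgP (N ⧸ S)
    rw [Module.finrank_zero_of_subsingleton (M := (N ⧸ S) →ₗ[A] τM)] at e1
    rw [Module.finrank_zero_of_subsingleton (M := P →ₗ[A] (N ⧸ S))] at e2
    rw [hsplit S, e1, e2]
    have : (0 : ℤ) ≤ (Module.finrank k (M →ₗ[A] (N ⧸ S)) : ℤ) := Int.natCast_nonneg _
    push_cast
    linarith
  · intro hineq
    -- Part (a): Hom(N, τM) = 0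
    have hNτ : ∀ f : N →ₗ[A] τM, f = 0 := by
      intro f
      set S := LinearMap.ker f with hS
      haveI := quotFD_aux k A N S
      haveI := homFD_aux k A (N ⧸ S) τM
      haveI := homFD_aux k A M (N ⧸ S)
      haveI := homFD_aux k A P (N ⧸ S)
      -- induced injective map on the quotient
      set fbar : (N ⧸ S) →ₗ[A] τM := S.liftQ f le_rfl with hfbar
      have hinj : Function.Injective fbar := by
        rw [← LinearMap.ker_eq_bot]
        exact Submodule.ker_liftQ_eq_bot _ _ _ le_rfl
      -- Hom(M, N⧸S) = 0 since N⧸S embeds into τM and Hom(M, τM) = 0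
      have hM0 : ∀ h : M →ₗ[A] (N ⧸ S), h = 0 := by
        intro h
        have hc : fbar.comp h = 0 := hrigid _
        ext x
        apply hinj
        simpa using LinearMap.congr_fun hc x
      haveI sM : Subsingleton (M →ₗ[A] (N ⧸ S)) := ⟨fun a b => (hM0 a).trans (hM0 b).symm⟩
      have e1 := hARM (N ⧸ S)
      have e2 := hgP (N ⧸ S)
      rw [Module.finrank_zero_of_subsingleton (M := M →ₗ[A] (N ⧸ S))] at e1
      have hq := hineq S
      rw [hsplit S, e1, e2] at hq
      push_cast at hq
      have h0 : Module.finrank k ((N ⧸ S) →ₗ[A] τM) = 0 := by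
        have hnn : (0 : ℤ) ≤ (Module.finrank k (P →ₗ[A] (N ⧸ S)) : ℤ) := Int.natCast_nonneg _
        have : ((Module.finrank k ((N ⧸ S) →ₗ[A] τM) : ℤ)) ≤ 0 := by linarith
        exact_mod_cast le_antisymm this (Int.natCast_nonneg _)
      haveI : Subsingleton ((N ⧸ S) →ₗ[A] τM) := Module.finrank_zero_iff.mp h0
      have : fbar = 0 := Subsingleton.elim _ _
      ext x
      have hx : f x = fbar (S.mkQ x) := by simp [hfbar]
      rw [hx, this]
      simp
    -- Part (b): Hom(P, N⧸S) = 0 for every submodule S, by Noetherian induction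
    haveI : IsNoetherian A N := isNoetherian_of_tower k inferInstance
    have key : ∀ S : Submodule A N, ∀ g : P →ₗ[A] (N ⧸ S), g = 0 := by
      intro S
      refine IsNoetherian.induction
        (P := fun S : Submodule A N => ∀ g : P →ₗ[A] (N ⧸ S), g = 0) ?_ S
      intro S IH g
      by_contra hg
      haveI := quotFD_aux k A N S
      haveI := homFD_aux k A (N ⧸ S) τM
      haveI := homFD_aux k A M (N ⧸ S)
      haveI := homFD_aux k A P (N ⧸ S)
      -- Hom(N⧸S, τM) = 0 from part (a)
      have h1 : ∀ f : (N ⧸ S) →ₗ[A] τM, f = 0 := by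
        intro f
        have h := hNτ (f.comp S.mkQ)
        ext x
        simpa using LinearMap.congr_fun h x
      haveI s1 : Subsingleton ((N ⧸ S) →ₗ[A] τM) := ⟨fun a b => (h1 a).trans (h1 b).symm⟩
      have e1 := hARM (N ⧸ S)
      have e2 := hgP (N ⧸ S)
      rw [Module.finrank_zero_of_subsingleton (M := (N ⧸ S) →ₗ[A] τM)] at e1
      have hq := hineq S
      rw [hsplit S, e1, e2] at hq
      -- Hom(P, N⧸S) ≠ 0, so finrank Hom(M, N⧸S) > 0
      haveI : Nontrivial (P →ₗ[A] (N ⧸ S)) := ⟨g, 0, hg⟩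
      have hPpos : 0 < Module.finrank k (P →ₗ[A] (N ⧸ S)) := Module.finrank_pos_iff.mpr this
      have hMpos : 0 < Module.finrank k (M →ₗ[A] (N ⧸ S)) := by
        by_contra hM
        push_neg at hM
        have hMfr : Module.finrank k (M →ₗ[A] (N ⧸ S)) = 0 := Nat.le_zero.mp hM
        rw [hMfr] at hq
        push_cast at hq
        have : (0 : ℤ) < (Module.finrank k (P →ₗ[A] (N ⧸ S)) : ℤ) := by exact_mod_cast hPpos
        linarith
      haveI : Nontrivial (M →ₗ[A] (N ⧸ S)) := Module.nontrivial_of_finrank_pos hMpos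
      obtain ⟨h, hh⟩ := exists_ne (0 : M →ₗ[A] (N ⧸ S))
      set T := LinearMap.range h with hT
      set S' := T.comap S.mkQ with hS'
      have hle : S ≤ S' := by
        intro x hx
        show S.mkQ x ∈ T
        have : S.mkQ x = 0 := (Submodule.Quotient.mk_eq_zero S).mpr hx
        rw [this]
        exact T.zero_mem
      have hlt : S < S' := by
        rcases lt_or_eq_of_le hle with h' | h'
        · exact h'
        · exfalso
          apply hh
          ext m
          have hmem : h m ∈ T := LinearMap.mem_range_self h m
          obtain ⟨x, hx⟩ := Submodule.mkQ_surjective S (h m)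
          have hxS' : x ∈ S' := by rw [hS', Submodule.mem_comap, hx]; exact hmem
          rw [← h'] at hxS'
          have : S.mkQ x = 0 := (Submodule.Quotient.mk_eq_zero S).mpr hxS'
          rw [hx] at this
          simp [this]
      have hIH := IH S' hlt
      -- the composite P → N⧸S → N⧸S' vanishes, so g lands in T = range h
      set π : (N ⧸ S) →ₗ[A] (N ⧸ S') :=
        Submodule.mapQ S S' LinearMap.id (fun x hx => hle hx) with hπ
      have hc : π.comp g = 0 := hIH _
      have hrange : ∀ p, g p ∈ T := by
        intro p
        have hπp : π (g p) = 0 := by simpa using LinearMap.congr_fun hc p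
        obtain ⟨x, hx⟩ := Submodule.mkQ_surjective S (g p)
        rw [← hx]
        rw [← hx, Submodule.mkQ_apply, Submodule.mapQ_apply, LinearMap.id_apply,
          ← Submodule.mkQ_apply, ← LinearMap.mem_ker, Submodule.ker_mkQ] at hπp
        exact hπp
      -- lift via projectivity of P through the surjection M → range h
      set g' : P →ₗ[A] T := LinearMap.codRestrict T g hrange with hg'
      obtain ⟨φ, hφ⟩ := Module.projective_lifting_property h.rangeRestrict g'
        (LinearMap.surjective_rangeRestrict h)
      rw [hPM φ, LinearMap.comp_zero] at hφ
      apply hg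
      ext p
      have hp : g' p = 0 := by rw [← hφ]; rfl
      have : (g' p : N ⧸ S) = g p := rfl
      rw [← this, hp]
      rfl
    refine ⟨hNτ, fun g => ?_⟩
    have hz := key ⊥ ((⊥ : Submodule A N).mkQ.comp g)
    have hinj : Function.Injective (⊥ : Submodule A N).mkQ := by
      rw [← LinearMap.ker_eq_bot, Submodule.ker_mkQ]
    ext p
    apply hinj
    simpa using LinearMap.congr_fun hz p
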